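/- For n ≥ 1 and 2 ≤ k ≤ n, the number of permutations of {1,...,n} with no peaks whose first entry equals k is 2^(k-2); the number with first entry equal to 1 is 1 (namely the identity permutation). -/

import Mathlib

/-- One step-by-step implementation of the `SC_231` stack-sorting machine.
`sc231Aux input stack out`: the next input entry is pushed onto the stack unless
pushing it would create a consecutive occurrence of the pattern `231` read from
top to bottom among the stack entries (i.e. the incoming `x` on top of `y`, `z`
with `z < x < y`), in which case the top of the stack is popped and appended to
the output; once the input is exhausted the remaining stack entries are popped. -/
def sc231Aux : List ℕ → List ℕ → List ℕ → List ℕ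
  | [], stack, out => out ++ stack
  | x :: rest, y :: z :: s, out =>
      if z < x ∧ x < y then sc231Aux (x :: rest) (z :: s) (out ++ [y])
      else sc231Aux rest (x :: y :: z :: s) out
  | x :: rest, stack, out => sc231Aux rest (x :: stack) out
termination_by input stack _ => 2 * input.length + stack.length
decreasing_by all_goals (simp; try omega)

/-- The consecutive-pattern-avoiding stack sort map `SC_231`. -/
def SC231 (p : List ℕ) : List ℕ := sc231Aux p [] []

/-- The list of entries that are *pre-popped* while `SC_231` processes the
input, i.e. popped while input entries still remain. -/
def prePopsAux : List ℕ → List ℕ → List ℕ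
  | [], _ => []
  | x :: rest, y :: z :: s =>
      if z < x ∧ x < y then y :: prePopsAux (x :: rest) (z :: s)
      else prePopsAux rest (x :: y :: z :: s)
  | x :: rest, stack => prePopsAux rest (x :: stack)
termination_by input stack => 2 * input.length + stack.length
decreasing_by all_goals (simp; try omega)

def prePops (p : List ℕ) : List ℕ := prePopsAux p []

/-- `p` has a peak: an interior position whose entry exceeds both neighbours. -/
def HasPeak (p : List ℕ) : Prop :=
  ∃ i, i + 2 < p.length ∧ p[i]! < p[i+1]! ∧ p[i+2]! < p[i+1]!

/-- `p` is a permutation of `{1, …, n}` (written as a list of its entries). -/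
def IsPermOf (n : ℕ) (p : List ℕ) : Prop := p.Perm (List.range' 1 n)

/-- `p` contains the (classical) pattern `q`. -/
def ContainsPat (p q : List ℕ) : Prop :=
  ∃ s : List ℕ, s.Sublist p ∧ s.length = q.length ∧
    ∀ i j, i < s.length → j < s.length → (s[i]! < s[j]! ↔ q[i]! < q[j]!)

def AvoidsPat (p q : List ℕ) : Prop := ¬ ContainsPat p q

/-- The sort-number of `p`: the least `k` with `SC_231^k(p)` peakless. -/
noncomputable def sortNum (p : List ℕ) : ℕ := sInf {k | ¬ HasPeak (SC231^[k] p)}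

namespace PeakAux

lemma chain'_iff_getbang {R : ℕ → ℕ → Prop} {l : List ℕ} :
    l.Chain' R ↔ ∀ j, j + 1 < l.length → R l[j]! l[j+1]! := by
  unfold List.Chain'
  rw [List.isChain_iff_getElem]
  constructor
  · intro h j hj
    rw [getElem!_pos l j (by omega), getElem!_pos l (j+1) hj]
    simpa [List.get_eq_getElem] using h j (by omega)
  · intro h j hj
    have := h j (by omega)
    rw [getElem!_pos l j (by omega), getElem!_pos l (j+1) (by omega)] at this
    simpa [List.get_eq_getElem] using this

lemma getbang_append_left {a b : List ℕ} {j : ℕ} (h : j < a.length) :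
    (a ++ b)[j]! = a[j]! := by
  rw [getElem!_pos (a ++ b) j (by simp; omega), getElem!_pos a j h,
    List.getElem_append_left]

lemma getbang_append_right {a b : List ℕ} {j : ℕ} (h1 : a.length ≤ j)
    (h2 : j < a.length + b.length) :
    (a ++ b)[j]! = b[j - a.length]! := by
  rw [getElem!_pos (a ++ b) j (by simp; omega), getElem!_pos b (j - a.length) (by omega),
    List.getElem_append_right h1]

lemma getbang_take {p : List ℕ} {t j : ℕ} (h : j < t) (h2 : j < p.length) :
    (p.take t)[j]! = p[j]! := by
  rw [getElem!_pos (p.take t) j (by rw [List.length_take]; omega), getElem!_pos p j h2,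
    List.getElem_take]

lemma getbang_drop {p : List ℕ} {t j : ℕ} (h : t + j < p.length) :
    (p.drop t)[j]! = p[t+j]! := by
  rw [getElem!_pos (p.drop t) j (by rw [List.length_drop]; omega), getElem!_pos p (t+j) h,
    List.getElem_drop]

lemma noPeak_of_chains {a b : List ℕ} (ha : a.Chain' (· > ·)) (hb : b.Chain' (· < ·)) :
    ¬ HasPeak (a ++ b) := by
  rintro ⟨i, hi, h1, h2⟩
  rw [List.length_append] at hi
  rcases lt_or_ge (i+1) a.length with hc | hc
  · rw [getbang_append_left (by omega), getbang_append_left hc] at h1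
    exact absurd h1 (not_lt.2 (chain'_iff_getbang.1 ha i hc).le)
  · rw [getbang_append_right hc (by omega), getbang_append_right (by omega) (by omega)] at h2
    have := chain'_iff_getbang.1 hb (i + 1 - a.length) (by omega)
    have e : i + 2 - a.length = (i + 1 - a.length) + 1 := by omega
    rw [e] at h2
    exact absurd h2 (not_lt.2 this.le)

lemma nodup_getbang_ne {p : List ℕ} (h : p.Nodup) {i j : ℕ} (hi : i < p.length)
    (hj : j < p.length) (hij : i ≠ j) : p[i]! ≠ p[j]! := by
  rw [getElem!_pos p i hi, getElem!_pos p j hj]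
  intro he
  exact hij ((h.getElem_inj_iff).1 he)

lemma exists_decomp {p : List ℕ} (hnd : p.Nodup) (hnp : ¬ HasPeak p) :
    ∃ a b, p = a ++ b ∧ a.Chain' (· > ·) ∧ b.Chain' (· < ·) ∧
      ∀ x ∈ a.getLast?, ∀ y ∈ b.head?, x < y := by
  unfold HasPeak at hnp
  push_neg at hnp
  by_cases hasc : ∃ j, j + 1 < p.length ∧ p[j]! < p[j+1]!
  · classical
    set m := Nat.find hasc with hm
    obtain ⟨hmlen, hmasc⟩ := Nat.find_spec hasc
    have asc : ∀ d, m + d + 1 < p.length → p[m+d]! < p[m+d+1]! := by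
      intro d
      induction d with
      | zero => intro _; simpa [hm] using hmasc
      | succ d ih =>
        intro h
        have ha := ih (by omega)
        have hle := hnp (m + d) (by omega) ha
        have hne := nodup_getbang_ne hnd (show m+d+1 < p.length by omega)
          (show m+d+2 < p.length by omega) (by omega)
        exact lt_of_le_of_ne hle hne
    have desc : ∀ j, j + 1 ≤ m → j + 1 < p.length → p[j+1]! < p[j]! := by
      intro j h1 h2
      have hna : ¬ (j + 1 < p.length ∧ p[j]! < p[j+1]!) := Nat.find_min hasc (by omega)
      push_neg at hna
      exact lt_of_le_of_ne (hna h2) (nodup_getbang_ne hnd h2 (by omega) (by omega))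
    refine ⟨p.take (m+1), p.drop (m+1), (List.take_append_drop _ _).symm, ?_, ?_, ?_⟩
    · rw [chain'_iff_getbang]
      intro j hj
      rw [List.length_take] at hj
      have hj' : j + 1 ≤ m := by omega
      have hjp : j + 1 < p.length := by omega
      rw [getbang_take (by omega) (by omega), getbang_take (by omega) hjp]
      exact desc j hj' hjp
    · rw [chain'_iff_getbang]
      intro j hj
      rw [List.length_drop] at hj
      rw [getbang_drop (by omega), getbang_drop (by omega)]
      have := asc (1 + j) (by omega)
      have e1 : m + 1 + j = m + (1 + j) := by omega
      have e2 : m + 1 + (j + 1) = m + (1 + j) + 1 := by omega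
      rw [e1, e2]
      exact this
    · intro x hx y hy
      have hlen : (p.take (m+1)).length = m + 1 := by
        rw [List.length_take]; omega
      rw [List.getLast?_eq_getElem?, hlen] at hx
      simp only [Nat.add_sub_cancel] at hx
      rw [List.getElem?_eq_getElem (by rw [hlen]; omega)] at hx
      rw [List.head?_eq_getElem?, List.getElem?_eq_getElem (by rw [List.length_drop]; omega)] at hy
      have ex : (p.take (m+1))[m]'(by rw [hlen]; omega) = p[m]! := by
        rw [getElem!_pos p m (by omega)]; exact List.getElem_take
      have ey : (p.drop (m+1))[0]'(by rw [List.length_drop]; omega) = p[m+1]! := by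
        rw [getElem!_pos p (m+1) hmlen]
        have := List.getElem_drop (xs := p) (i := m+1) (j := 0) (h := by rw [List.length_drop]; omega)
        simpa using this
      rw [Option.mem_def] at hx hy
      have hx' : x = p[m]! := by rw [← ex]; exact (Option.some_injective _ hx.symm)
      have hy' : y = p[m+1]! := by rw [← ey]; exact (Option.some_injective _ hy.symm)
      rw [hx', hy']
      exact hmasc
  · push_neg at hasc
    refine ⟨p, [], by simp, ?_, List.isChain_nil, by simp⟩
    rw [chain'_iff_getbang]
    intro j hj
    exact lt_of_le_of_ne (hasc j hj)
      (nodup_getbang_ne hnd hj (by omega) (by omega))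


/-- The peakless permutation with descending part `k, S (descending), 1`. -/
def valleyPerm (n k : ℕ) (S : Finset ℕ) : List ℕ :=
  (k :: (S.sort (· ≤ ·)).reverse ++ [1]) ++
    (Finset.sort (Finset.Icc 2 n \ insert k S) (· ≤ ·))

lemma range'_toFinset (n : ℕ) : (List.range' 1 n).toFinset = Finset.Icc 1 n := by
  ext x; simp [List.mem_range'_1, Finset.mem_Icc]; omega

lemma pairwise_desc {k : ℕ} {S : Finset ℕ} (hk : 2 ≤ k) (hS : S ⊆ Finset.Icc 2 (k-1)) :
    List.Pairwise (· > ·) (k :: (S.sort (· ≤ ·)).reverse ++ [1]) := by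
  have hmem : ∀ x ∈ S, 2 ≤ x ∧ x ≤ k - 1 := fun x hx => Finset.mem_Icc.1 (hS hx)
  rw [List.cons_append, List.pairwise_cons]
  constructor
  · intro x hx
    rcases List.mem_append.1 hx with hx | hx
    · have := hmem x (by simpa [Finset.mem_sort] using hx)
      omega
    · simp at hx; omega
  · rw [List.pairwise_append]
    refine ⟨?_, by simp, ?_⟩
    · rw [List.pairwise_reverse]
      exact ((Finset.sortedLT_sort S).pairwise)
    · intro x hx y hy
      have := hmem x (by simpa [Finset.mem_sort] using hx)
      simp at hy; omega

lemma valleyPerm_toFinset {n k : ℕ} {S : Finset ℕ} (hk : 2 ≤ k) (hkn : k ≤ n)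
    (hS : S ⊆ Finset.Icc 2 (k-1)) :
    (valleyPerm n k S).toFinset = Finset.Icc 1 n := by
  have hmem : ∀ x ∈ S, 2 ≤ x ∧ x ≤ k - 1 := fun x hx => Finset.mem_Icc.1 (hS hx)
  ext x
  by_cases h3 : x ∈ S
  · have hb := hmem x h3
    simp [valleyPerm, h3, Finset.mem_sdiff, Finset.mem_Icc]
    omega
  · simp [valleyPerm, h3, Finset.mem_sdiff, Finset.mem_Icc]
    omega

lemma valleyPerm_nodup {n k : ℕ} {S : Finset ℕ} (hk : 2 ≤ k)
    (hS : S ⊆ Finset.Icc 2 (k-1)) : (valleyPerm n k S).Nodup := by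
  have hmem : ∀ x ∈ S, 2 ≤ x ∧ x ≤ k - 1 := fun x hx => Finset.mem_Icc.1 (hS hx)
  rw [valleyPerm, List.nodup_append]
  refine ⟨((pairwise_desc hk hS).imp fun h => ne_of_gt h), (Finset.sort_nodup _ _), ?_⟩
  intro x hx y hx' hxy
  subst hxy
  have hx2 : x ∈ Finset.Icc 2 n \ insert k S := by simpa [Finset.mem_sort] using hx'
  rw [Finset.mem_sdiff, Finset.mem_insert] at hx2
  rcases (by simpa [Finset.mem_sort] using hx : x = k ∨ x ∈ S ∨ x = 1) with rfl | h | rfl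
  · tauto
  · exact hx2.2 (Or.inr h)
  · have := Finset.mem_Icc.1 hx2.1; omega

lemma valleyPerm_isPermOf {n k : ℕ} {S : Finset ℕ} (hk : 2 ≤ k) (hkn : k ≤ n)
    (hS : S ⊆ Finset.Icc 2 (k-1)) : IsPermOf n (valleyPerm n k S) :=
  List.perm_of_nodup_nodup_toFinset_eq (valleyPerm_nodup hk hS) (List.nodup_range' (s := 1) (n := n))
    (by rw [valleyPerm_toFinset hk hkn hS, range'_toFinset])

lemma valleyPerm_head {n k : ℕ} {S : Finset ℕ} :
    (valleyPerm n k S).head? = some k := rfl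



instance : IsAntisymm ℕ (· > ·) := ⟨fun a b h1 h2 => absurd h1 (lt_asymm h2)⟩

lemma takeWhile_ne_one {l t : List ℕ} (h : ∀ x ∈ l, x ≠ 1) :
    (l ++ 1 :: t).takeWhile (· ≠ 1) = l := by
  induction l with
  | nil => simp
  | cons a l ih =>
    rw [List.cons_append,
      List.takeWhile_cons_of_pos (by simpa using h a (List.mem_cons_self)),
      ih (fun x hx => h x (List.mem_cons_of_mem _ hx))]

lemma valleyPerm_recover {n k : ℕ} {S : Finset ℕ} (hk : 2 ≤ k)
    (hS : S ⊆ Finset.Icc 2 (k-1)) :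
    ((valleyPerm n k S).takeWhile (· ≠ 1)).toFinset \ {k} = S := by
  have hmem : ∀ x ∈ S, 2 ≤ x ∧ x ≤ k - 1 := fun x hx => Finset.mem_Icc.1 (hS hx)
  have he : valleyPerm n k S =
      (k :: (S.sort (· ≤ ·)).reverse) ++ 1 :: (Finset.sort (Finset.Icc 2 n \ insert k S) (· ≤ ·)) := by
    simp [valleyPerm]
  rw [he, takeWhile_ne_one ?hne]
  case hne =>
    intro x hx
    rcases List.mem_cons.1 hx with rfl | hx
    · omega
    · have := hmem x (by simpa [Finset.mem_sort] using hx); omega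
  ext x
  simp only [List.toFinset_cons, List.toFinset_reverse, Finset.sort_toFinset,
    Finset.mem_sdiff, Finset.mem_insert, Finset.mem_singleton]
  constructor
  · rintro ⟨rfl | hx, hne⟩
    · exact absurd rfl hne
    · exact hx
  · intro hx
    have := hmem x hx
    exact ⟨Or.inr hx, by omega⟩


lemma exists_S {n k : ℕ} {p' : List ℕ} (hn : 1 ≤ n) (hk : 2 ≤ k) (hkn : k ≤ n)
    (hperm : IsPermOf n (k :: p')) (hnp : ¬ HasPeak (k :: p')) :
    ∃ S ⊆ Finset.Icc 2 (k-1), valleyPerm n k S = k :: p' := by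
  classical
  have hnd : (k :: p').Nodup := hperm.nodup_iff.2 (List.nodup_range' (s := 1) (n := n))
  have hiff : ∀ x, x ∈ k :: p' ↔ (1 ≤ x ∧ x ≤ n) := by
    intro x; rw [hperm.mem_iff, List.mem_range'_1]; omega
  obtain ⟨a, b, hab, ha, hb, hlink⟩ := exists_decomp hnd hnp
  have hane : a ≠ [] := by
    rintro rfl
    simp only [List.nil_append] at hab
    have hpw : List.Pairwise (· < ·) (k :: p') := by
      rw [hab]; exact List.isChain_iff_pairwise.1 hb
    have h1 : 1 ∈ k :: p' := (hiff 1).2 ⟨le_refl 1, hn⟩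
    rcases List.mem_cons.1 h1 with h | h
    · omega
    · have := (List.pairwise_cons.1 hpw).1 1 h; omega
  obtain ⟨a', rfl⟩ : ∃ a', a = k :: a' := by
    rcases a with _ | ⟨y, a'⟩
    · exact absurd rfl hane
    · simp only [List.cons_append, List.cons.injEq] at hab
      exact ⟨a', by rw [hab.1]⟩
  have hpa : List.Pairwise (· > ·) (k :: a') := List.isChain_iff_pairwise.1 ha
  have hpb : List.Pairwise (· < ·) b := List.isChain_iff_pairwise.1 hb
  have hndab := hnd; rw [hab, List.nodup_append] at hndab
  obtain ⟨hnda, hndb, hdisj⟩ := hndab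
  have hne2 : (k :: a') ≠ [] := by simp
  set L := (k :: a').getLast hne2 with hL
  have hLmem : L ∈ k :: p' := by
    rw [hab]; exact List.mem_append.2 (Or.inl (List.getLast_mem hne2))
  have hLlt : ∀ x ∈ k :: p', x ≠ L → L < x := by
    intro x hx hxne
    rw [hab] at hx
    rcases List.mem_append.1 hx with hxa | hxb
    · have hre : (k :: a').dropLast ++ [L] = k :: a' := List.dropLast_append_getLast hne2
      have hpw2 : List.Pairwise (· > ·) ((k :: a').dropLast ++ [L]) := by
        rw [hre]; exact hpa
      have hxmem : x ∈ (k :: a').dropLast ++ [L] := by rw [hre]; exact hxa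
      rcases List.mem_append.1 hxmem with h | h
      · exact (List.pairwise_append.1 hpw2).2.2 x h L (by simp)
      · simp only [List.mem_singleton] at h; exact absurd h hxne
    · rcases b with _ | ⟨y, b'⟩
      · exact absurd hxb (List.not_mem_nil)
      · have hky : L < y := hlink L (by simp [List.getLast?_eq_getLast hne2, hL])
          y (by simp)
        rcases List.mem_cons.1 hxb with rfl | h
        · exact hky
        · have := (List.pairwise_cons.1 hpb).1 x h; omega
  have hL1 : L = 1 := by
    have h1p : 1 ∈ k :: p' := (hiff 1).2 ⟨le_refl 1, hn⟩
    have hL1' := (hiff L).1 hLmem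
    by_contra hne
    have := hLlt 1 h1p (fun h => hne h.symm)
    omega
  have h1a : 1 ∈ k :: a' := by rw [← hL1]; exact List.getLast_mem hne2
  have hak : ∀ x ∈ a', x < k := fun x hx => (List.pairwise_cons.1 hpa).1 x hx
  refine ⟨(k :: a').toFinset \ {1, k}, ?_, ?_⟩
  case _ =>
    intro x hx
    simp only [Finset.mem_sdiff, List.mem_toFinset, Finset.mem_insert,
      Finset.mem_singleton, List.mem_cons] at hx
    obtain ⟨hxa, hnot⟩ := hx
    push_neg at hnot
    rcases hxa with rfl | hxa
    · exact absurd rfl hnot.2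
    · have hxk := hak x hxa
      have hx1 := (hiff x).1 (by rw [hab]; exact List.mem_append.2 (Or.inl (List.mem_cons_of_mem _ hxa)))
      rw [Finset.mem_Icc]; omega
  case _ =>
    set S : Finset ℕ := (k :: a').toFinset \ {1, k} with hSdef
    have hSsub : S ⊆ Finset.Icc 2 (k-1) := by
      intro x hx
      simp only [hSdef, Finset.mem_sdiff, List.mem_toFinset, Finset.mem_insert,
        Finset.mem_singleton, List.mem_cons] at hx
      obtain ⟨hxa, hnot⟩ := hx
      push_neg at hnot
      rcases hxa with rfl | hxa
      · exact absurd rfl hnot.2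
      · have hxk := hak x hxa
        have hx1 := (hiff x).1 (by rw [hab]; exact List.mem_append.2 (Or.inl (List.mem_cons_of_mem _ hxa)))
        rw [Finset.mem_Icc]; omega
    have hmemS : ∀ x, x ∈ S ↔ ((x = k ∨ x ∈ a') ∧ x ≠ 1 ∧ x ≠ k) := by
      intro x
      simp only [hSdef, Finset.mem_sdiff, List.mem_toFinset, Finset.mem_insert,
        Finset.mem_singleton, List.mem_cons]
      tauto
    have hchunk1 : k :: (S.sort (· ≤ ·)).reverse ++ [1] = k :: a' := by
      refine (fun hp h1 h2 => List.Perm.eq_of_pairwise' (r := (· > ·)) h1 h2 hp) ?_ ?_ ?_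
      · apply List.perm_of_nodup_nodup_toFinset_eq
        · exact (pairwise_desc hk hSsub).imp fun h => ne_of_gt h
        · exact hnda
        · ext x
          simp only [List.cons_append, List.toFinset_cons, List.toFinset_append,
            List.toFinset_reverse, Finset.sort_toFinset, List.toFinset_nil,
            Finset.mem_insert, Finset.mem_union, Finset.mem_singleton,
            List.mem_toFinset, insert_empty_eq]
          rw [hmemS x]
          constructor
          · rintro (rfl | ⟨hx, _, _⟩ | rfl)
            · exact Or.inl rfl
            · exact hx
            · exact List.mem_cons.1 h1a
          · intro hx
            by_cases h1 : x = 1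
            · tauto
            by_cases h2 : x = k
            · tauto
            · exact Or.inr (Or.inl ⟨hx, h1, h2⟩)
      · exact pairwise_desc hk hSsub
      · exact hpa
    have hchunk2 : Finset.sort (Finset.Icc 2 n \ insert k S) (· ≤ ·) = b := by
      refine (fun hp h1 h2 => List.Perm.eq_of_pairwise' (r := (· < ·)) h1 h2 hp) ?_ ?_ ?_
      · apply List.perm_of_nodup_nodup_toFinset_eq
        · exact Finset.sort_nodup _ _
        · exact hndb
        · rw [Finset.sort_toFinset]
          ext x
          simp only [List.mem_toFinset, Finset.mem_sdiff, Finset.mem_Icc, Finset.mem_insert]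
          rw [hmemS x]
          constructor
          · rintro ⟨⟨hx2, hxn⟩, hnot⟩
            have hxp : x ∈ k :: p' := (hiff x).2 ⟨by omega, hxn⟩
            rw [hab] at hxp
            rcases List.mem_append.1 hxp with hxa | hxb
            · exact absurd (Or.inr ⟨List.mem_cons.1 hxa, by omega,
                fun hh => hnot (Or.inl hh)⟩) hnot
            · exact hxb
          · intro hxb
            have hxp : x ∈ k :: p' := by rw [hab]; exact List.mem_append.2 (Or.inr hxb)
            have hxna : x ∉ k :: a' := fun h => hdisj x h x hxb rfl
            have hx1 : x ≠ 1 := fun h => hxna (h ▸ h1a)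
            have := (hiff x).1 hxp
            refine ⟨⟨by omega, this.2⟩, ?_⟩
            rintro (rfl | ⟨hxa, _, _⟩)
            · exact hxna (List.mem_cons_self)
            · rcases hxa with rfl | hxa
              · exact hxna (List.mem_cons_self)
              · exact hxna (List.mem_cons_of_mem _ hxa)
      · exact (Finset.sortedLT_sort _).pairwise
      · exact hpb
    rw [hab, ← hchunk1, ← hchunk2]
    rfl


lemma valleyPerm_noPeak {n k : ℕ} {S : Finset ℕ} (hk : 2 ≤ k)
    (hS : S ⊆ Finset.Icc 2 (k-1)) : ¬ HasPeak (valleyPerm n k S) :=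
  noPeak_of_chains ((pairwise_desc hk hS).isChain)
    (List.Pairwise.isChain (Finset.sortedLT_sort _).pairwise)

instance : IsAntisymm ℕ (· < ·) := ⟨fun a b h1 h2 => absurd h1 (lt_asymm h2)⟩

lemma range'_head {n : ℕ} (hn : 1 ≤ n) : (List.range' 1 n).head? = some 1 := by
  cases n with
  | zero => omega
  | succ m => simp [List.range']

end PeakAux

/-- For `2 ≤ k ≤ n`, there are exactly `2^(k-2)` peakless permutations of `{1,…,n}`
with first entry `k`; for `k = 1` the only one is the identity permutation. -/
theorem card_peakless_perms_by_first_entry (n k : ℕ) (hn : 1 ≤ n) (hkn : k ≤ n) :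
    (2 ≤ k →
      {p : List ℕ | IsPermOf n p ∧ ¬ HasPeak p ∧ p.head? = some k}.ncard = 2 ^ (k - 2)) ∧
    (k = 1 →
      {p : List ℕ | IsPermOf n p ∧ ¬ HasPeak p ∧ p.head? = some k} = {List.range' 1 n}) := by
  classical
  constructor
  · intro hk
    have hinj : Set.InjOn (PeakAux.valleyPerm n k) ↑((Finset.Icc 2 (k-1)).powerset) := by
      intro S hS S' hS' he
      have h1 := PeakAux.valleyPerm_recover (n := n) hk
        (Finset.mem_powerset.1 (Finset.mem_coe.1 hS))
      have h2 := PeakAux.valleyPerm_recover (n := n) hk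
        (Finset.mem_powerset.1 (Finset.mem_coe.1 hS'))
      rw [← h1, ← h2, he]
    have hset : {p : List ℕ | IsPermOf n p ∧ ¬ HasPeak p ∧ p.head? = some k} =
        PeakAux.valleyPerm n k '' ↑((Finset.Icc 2 (k-1)).powerset) := by
      ext p
      simp only [Set.mem_setOf_eq, Set.mem_image, Finset.mem_coe, Finset.mem_powerset]
      constructor
      · rintro ⟨hperm, hnp, hhead⟩
        rcases p with _ | ⟨x, p'⟩
        · exact absurd hhead (by simp)
        · have hx : x = k := by simpa using hhead
          subst hx
          obtain ⟨S, hS, hSe⟩ := PeakAux.exists_S hn hk hkn hperm hnp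
          exact ⟨S, hS, hSe⟩
      · rintro ⟨S, hS, rfl⟩
        exact ⟨PeakAux.valleyPerm_isPermOf hk hkn hS,
          PeakAux.valleyPerm_noPeak hk hS, PeakAux.valleyPerm_head⟩
    rw [hset, Set.ncard_image_of_injOn hinj, Set.ncard_coe_finset,
      Finset.card_powerset, Nat.card_Icc]
    have he : k - 1 + 1 - 2 = k - 2 := by omega
    rw [he]
  · intro hk
    subst hk
    ext q
    simp only [Set.mem_setOf_eq, Set.mem_singleton_iff]
    constructor
    · rintro ⟨hperm, hnp, hhead⟩
      have hnd : q.Nodup := hperm.nodup_iff.2 (List.nodup_range' (s := 1) (n := n))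
      have hiff : ∀ x, x ∈ q ↔ (1 ≤ x ∧ x ≤ n) := by
        intro x; rw [hperm.mem_iff, List.mem_range'_1]; omega
      obtain ⟨a, b, hab, ha, hb, hlink⟩ := PeakAux.exists_decomp hnd hnp
      have hchain : q.Chain' (· < ·) := by
        rcases a with _ | ⟨x, a'⟩
        · rw [hab]; simpa using hb
        · have hx : x = 1 := by
            rw [hab] at hhead
            simpa using hhead
          subst hx
          rcases a' with _ | ⟨y, a''⟩
          · rw [hab]
            simp only [List.singleton_append]
            unfold List.Chain'
            rw [List.isChain_cons]
            refine ⟨?_, hb⟩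
            intro z hz
            exact hlink 1 (by simp) z hz
          · have h1y : (1:ℕ) > y :=
              (List.pairwise_cons.1 (List.isChain_iff_pairwise.1 ha)).1 y
                (List.mem_cons_self)
            have : y ∈ q := by
              rw [hab]
              exact List.mem_append.2 (Or.inl (List.mem_cons_of_mem _
                (List.mem_cons_self)))
            have := (hiff y).1 this
            omega
      exact List.Perm.eq_of_pairwise'
        (List.isChain_iff_pairwise.1 hchain) (List.pairwise_lt_range' (s := 1) (n := n)) hperm
    · rintro rfl
      refine ⟨List.Perm.refl _, ?_, PeakAux.range'_head hn⟩
      have := PeakAux.noPeak_of_chains (a := []) (b := List.range' 1 n)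
        List.isChain_nil (List.Pairwise.isChain (List.pairwise_lt_range' (s := 1) (n := n)))
      simpa using this
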